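/- For all f = (c_j)_{j∈ℕ} and g = (d_j)_{j∈ℕ} in D(N), the series Σ_{j∈ℕ} (−1)^j c_j and Σ_{k∈ℕ} (−1)^k d_k converge absolutely, and ⟨Nf, Φg⟩ − ⟨Φf, Ng⟩ = i⟨f, g⟩ − i·(Σ_{j∈ℕ} (−1)^j c_j)·conj(Σ_{k∈ℕ} (−1)^k d_k). -/

import Mathlib

noncomputable section

open MeasureTheory Complex Real AddCircle ContinuousLinearMap
open scoped ENNReal NNReal

namespace GW

/-- The Hilbert space `H = ℓ²(ℕ, ℂ)`. -/
abbrev H : Type := lp (fun _ : ℕ => ℂ) 2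

instance fact2pi : Fact (0 < 2 * Real.pi) := ⟨by positivity⟩

/-- The circle `𝕋`, realized as `ℝ / 2πℤ`; the point `θ` corresponds to `e^{iθ}`. -/
abbrev Circle2 : Type := AddCircle (2 * Real.pi)

/-- Normalized Lebesgue (Haar) measure `dθ/2π` on the circle. -/
abbrev μT : Measure Circle2 := @AddCircle.haarAddCircle (2 * Real.pi) fact2pi

/-- `L²(𝕋)` with respect to normalized Lebesgue measure. -/
abbrev L2T : Type := MeasureTheory.Lp ℂ 2 μT

/-- Extension of an `ℕ`-indexed coefficient sequence to `ℤ` by zero. -/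
def extz (f : ℕ → ℂ) : ℤ → ℂ := fun n => if 0 ≤ n then f n.toNat else 0

lemma extz_natCast (f : ℕ → ℂ) (n : ℕ) : extz f (n : ℤ) = f n := by
  simp [extz]

lemma extz_memℓp (f : H) : Memℓp (extz ⇑f) 2 := by
  apply memℓp_gen
  have hs : Summable fun n : ℕ => ‖(⇑f) n‖ ^ (2 : ℝ≥0∞).toReal :=
    (lp.memℓp f).summable (by norm_num)
  have h0 : ∀ z : ℤ, z ∉ Set.range ((↑·) : ℕ → ℤ) →
      ‖extz ⇑f z‖ ^ (2 : ℝ≥0∞).toReal = 0 := by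
    intro z hz
    have hneg : ¬ (0 : ℤ) ≤ z := fun h => hz ⟨z.toNat, by simpa using Int.toNat_of_nonneg h⟩
    simp only [extz, if_neg hneg, norm_zero]
    rw [Real.zero_rpow (by norm_num)]
  have hinj : Function.Injective ((↑·) : ℕ → ℤ) := fun a b h => by simpa using h
  refine (hinj.summable_iff h0).mp ?_
  refine hs.congr fun n => ?_
  simp [Function.comp, extz_natCast]

/-- The zero-extension `ℓ²(ℕ,ℂ) → ℓ²(ℤ,ℂ)`. -/
def extlp (f : H) : lp (fun _ : ℤ => ℂ) 2 := ⟨extz ⇑f, extz_memℓp f⟩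

/-- `J` as a plain function: send `(c_n)_{n∈ℕ}` to `Σ_{n∈ℕ} c_n e^{inθ}` in `L²(𝕋)`,
via the Fourier Hilbert basis of `L²(𝕋)`. -/
def Jmap (f : H) : L2T := (@fourierBasis (2 * Real.pi) fact2pi).repr.symm (extlp f)

lemma extlp_add (f g : H) : extlp (f + g) = extlp f + extlp g := by
  apply Subtype.ext
  funext n
  show extz (⇑(f + g)) n = extz ⇑f n + extz ⇑g n
  rcases le_or_gt 0 n with h | h
  · simp only [extz, if_pos h]
    exact congrFun (lp.coeFn_add f g) n.toNat
  · simp [extz, if_neg (not_le.mpr h)]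

lemma extlp_smul (c : ℂ) (f : H) : extlp (c • f) = c • extlp f := by
  apply Subtype.ext
  funext n
  show extz (⇑(c • f)) n = c • extz ⇑f n
  rcases le_or_gt 0 n with h | h
  · simp only [extz, if_pos h]
    rw [lp.coeFn_smul]
    rfl
  · simp [extz, if_neg (not_le.mpr h)]

/-- `J` as a linear map. -/
def Jlin : H →ₗ[ℂ] L2T where
  toFun := Jmap
  map_add' f g := show Jmap (f + g) = Jmap f + Jmap g by
    unfold Jmap; rw [extlp_add, map_add]
  map_smul' c f := show Jmap (c • f) = c • Jmap f by
    unfold Jmap; rw [extlp_smul, _root_.map_smul]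

lemma norm_extlp (f : H) : ‖extlp f‖ = ‖f‖ := by
  rw [lp.norm_eq_tsum_rpow (by norm_num : 0 < (2 : ℝ≥0∞).toReal) (extlp f),
    lp.norm_eq_tsum_rpow (by norm_num : 0 < (2 : ℝ≥0∞).toReal) f]
  congr 1
  have hinj : Function.Injective ((↑·) : ℕ → ℤ) := fun a b h => by simpa using h
  have h0 : ∀ z, z ∉ Set.range ((↑·) : ℕ → ℤ) →
      ‖extlp f z‖ ^ (2 : ℝ≥0∞).toReal = 0 := by
    intro z hz
    have hneg : ¬ (0 : ℤ) ≤ z := fun h => hz ⟨z.toNat, by simpa using Int.toNat_of_nonneg h⟩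
    show ‖extz ⇑f z‖ ^ (2 : ℝ≥0∞).toReal = 0
    simp only [extz, if_neg hneg, norm_zero]
    rw [Real.zero_rpow (by norm_num)]
  have hsupp : (Function.support fun z => ‖extlp f z‖ ^ (2 : ℝ≥0∞).toReal) ⊆
      Set.range ((↑·) : ℕ → ℤ) := by
    intro z hz
    by_contra h
    exact hz (h0 z h)
  have key := hinj.tsum_eq (f := fun z => ‖extlp f z‖ ^ (2 : ℝ≥0∞).toReal) hsupp
  rw [← key]
  exact tsum_congr fun n => by
    show ‖extz ⇑f (n : ℤ)‖ ^ (2 : ℝ≥0∞).toReal = _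
    rw [extz_natCast]

/-- The isometric embedding `J : H → L²(𝕋)` as a continuous linear map; it maps the `n`-th
standard basis vector of `ℓ²(ℕ,ℂ)` to `θ ↦ e^{inθ}`, `n ∈ ℕ`. -/
def JH : H →L[ℂ] L2T :=
  LinearMap.mkContinuousOfExistsBound Jlin
    ⟨1, fun f => by
      simp only [Jlin, LinearMap.coe_mk, AddHom.coe_mk, one_mul, Jmap]
      rw [LinearIsometryEquiv.norm_map]
      exact le_of_eq (norm_extlp f)⟩

end GW

namespace GW

/-- The argument function on the circle: `e^{iθ} ↦ θ` with `θ ∈ (−π, π]`, as a `ℂ`-valued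
function. -/
def argFun : Circle2 → ℂ :=
  fun x => (((AddCircle.measurableEquivIoc (2 * Real.pi) (-Real.pi) x : Set.Ioc (-Real.pi) (-Real.pi + 2 * Real.pi)) : ℝ) : ℂ)

lemma argFun_memℒp : MemLp argFun ⊤ μT := by
  apply memLp_top_of_bound (C := Real.pi)
  · exact (Complex.measurable_ofReal.comp (measurable_subtype_coe.comp
      (AddCircle.measurableEquivIoc (2 * Real.pi) (-Real.pi)).measurable)).aestronglyMeasurable
  · refine Filter.Eventually.of_forall fun x => ?_
    have h := (AddCircle.measurableEquivIoc (2 * Real.pi) (-Real.pi) x).2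
    have h1 : -Real.pi < ((AddCircle.measurableEquivIoc (2 * Real.pi) (-Real.pi) x : Set.Ioc (-Real.pi) (-Real.pi + 2 * Real.pi)) : ℝ) := h.1
    have h2 := h.2
    rw [argFun, Complex.norm_real, Real.norm_eq_abs, abs_le]
    constructor
    · linarith
    · linarith

lemma mul_memℒp (φ : Circle2 → ℂ) (hφ : MemLp φ ⊤ μT) (f : L2T) : MemLp (φ • ⇑f) 2 μT :=
  (Lp.memLp f).smul hφ

lemma mul_toLp_add (φ : Circle2 → ℂ) (hφ : MemLp φ ⊤ μT) (f g : L2T) :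
    (mul_memℒp φ hφ (f + g)).toLp (φ • ⇑(f + g)) =
      (mul_memℒp φ hφ f).toLp (φ • ⇑f) + (mul_memℒp φ hφ g).toLp (φ • ⇑g) := by
  rw [MemLp.toLp_congr (mul_memℒp φ hφ (f + g)) ((mul_memℒp φ hφ f).add (mul_memℒp φ hφ g))
    ((Lp.coeFn_add f g).mono fun x hx => by
      simp only [Pi.smul_apply', hx, Pi.add_apply, smul_add])]
  exact MemLp.toLp_add _ _

lemma mul_toLp_smul (φ : Circle2 → ℂ) (hφ : MemLp φ ⊤ μT) (c : ℂ) (f : L2T) :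
    (mul_memℒp φ hφ (c • f)).toLp (φ • ⇑(c • f)) = c • (mul_memℒp φ hφ f).toLp (φ • ⇑f) := by
  rw [MemLp.toLp_congr (mul_memℒp φ hφ (c • f)) ((mul_memℒp φ hφ f).const_smul c)
    ((Lp.coeFn_smul c f).mono fun x hx => by
      rw [Pi.smul_apply', hx, Pi.smul_apply, Pi.smul_apply, Pi.smul_apply', smul_comm])]
  exact MemLp.toLp_const_smul c _

/-- Multiplication by a bounded measurable function, as a linear map on `L²(𝕋)`. -/
def mulLin (φ : Circle2 → ℂ) (hφ : MemLp φ ⊤ μT) : L2T →ₗ[ℂ] L2T where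
  toFun f := (mul_memℒp φ hφ f).toLp (φ • ⇑f)
  map_add' f g := mul_toLp_add φ hφ f g
  map_smul' c f := mul_toLp_smul φ hφ c f

/-- Multiplication by a bounded measurable function, as a bounded operator on `L²(𝕋)`. -/
def mulCLM (φ : Circle2 → ℂ) (hφ : MemLp φ ⊤ μT) : L2T →L[ℂ] L2T :=
  LinearMap.mkContinuousOfExistsBound (mulLin φ hφ)
    ⟨(eLpNorm φ ⊤ μT).toReal, fun f => by
      simp only [mulLin, LinearMap.coe_mk, AddHom.coe_mk]
      rw [Lp.norm_toLp, Lp.norm_def]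
      rw [← ENNReal.toReal_mul]
      apply ENNReal.toReal_mono
      · exact ENNReal.mul_ne_top hφ.eLpNorm_ne_top (Lp.memLp f).eLpNorm_ne_top
      · exact eLpNorm_smul_le_mul_eLpNorm (p := ⊤) (q := 2) (Lp.memLp f).1 hφ.1⟩

/-- The Garrison–Wong phase operator `Φ = J* ∘ M_arg ∘ J` on `H`. -/
def Phi : H →L[ℂ] H :=
  (ContinuousLinearMap.adjoint JH) ∘L (mulCLM argFun argFun_memℒp) ∘L JH

/-- The domain of the number operator: `{f ∈ H : Σ n² |c_n|² < ∞}`. -/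
def domN : Set H := {f : H | Summable fun n : ℕ => (n : ℝ) ^ 2 * ‖f n‖ ^ 2}

lemma Nop_memℓp {f : H} (hf : f ∈ domN) : Memℓp (fun n : ℕ => (n : ℂ) * f n) 2 := by
  apply memℓp_gen
  refine Summable.congr hf fun n => ?_
  have h2 : ((2 : ℝ≥0∞)).toReal = ((2 : ℕ) : ℝ) := by norm_num
  rw [h2, Real.rpow_natCast]
  simp [norm_mul, mul_pow]

/-- The number operator `N`, defined on its maximal domain `domN`: `(Nf)_n = n·c_n`. -/
def Nop (f : H) (hf : f ∈ domN) : H := ⟨fun n : ℕ => (n : ℂ) * f n, Nop_memℓp hf⟩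

/-- The standard orthonormal basis `(e_n)` of `H`. -/
def eH (n : ℕ) : H := lp.single 2 n (1 : ℂ)

lemma norm_exp_mul (x : ℝ) (c : ℂ) : ‖Complex.exp ((x : ℂ) * Complex.I) * c‖ = ‖c‖ := by
  rw [norm_mul, Complex.norm_exp_ofReal_mul_I, one_mul]

lemma U_memℓp (t : ℝ) (f : H) : Memℓp (fun n : ℕ => Complex.exp (((n * t : ℝ) : ℂ) * Complex.I) * f n) 2 := by
  apply memℓp_gen
  refine Summable.congr ((lp.memℓp f).summable (by norm_num)) fun n => ?_
  rw [norm_exp_mul]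

/-- The unitary group `U_t = e^{itN}`: `(U_t f)_n = e^{int} f_n`, as a linear map. -/
def Ulin (t : ℝ) : H →ₗ[ℂ] H where
  toFun f := ⟨fun n : ℕ => Complex.exp (((n * t : ℝ) : ℂ) * Complex.I) * f n, U_memℓp t f⟩
  map_add' f g := by
    apply Subtype.ext
    funext n
    show Complex.exp _ * (⇑(f + g)) n = _
    rw [lp.coeFn_add]
    show Complex.exp _ * (f n + g n) =
      Complex.exp _ * f n + Complex.exp _ * g n
    ring
  map_smul' c f := by
    apply Subtype.ext
    funext n
    show Complex.exp _ * (⇑(c • f)) n = _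
    rw [lp.coeFn_smul]
    show Complex.exp _ * (c * f n) = c * (Complex.exp _ * f n)
    ring

/-- The unitary group `U_t = e^{itN}`: `(U_t f)_n = e^{int} f_n`. -/
def U (t : ℝ) : H →L[ℂ] H :=
  LinearMap.mkContinuousOfExistsBound (Ulin t)
    ⟨1, fun f => by
      simp only [Ulin, LinearMap.coe_mk, AddHom.coe_mk, one_mul]
      apply le_of_eq
      rw [lp.norm_eq_tsum_rpow (by norm_num : 0 < (2 : ℝ≥0∞).toReal),
        lp.norm_eq_tsum_rpow (by norm_num : 0 < (2 : ℝ≥0∞).toReal) f]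
      congr 1
      refine tsum_congr fun n => ?_
      show ‖Complex.exp (((n * t : ℝ) : ℂ) * Complex.I) * f n‖ ^ (2 : ℝ≥0∞).toReal = _
      rw [norm_exp_mul]⟩

/-- The indicator function of a subset of the circle, as a `ℂ`-valued function. -/
def indFun (B : Set Circle2) : Circle2 → ℂ := Set.indicator B (fun _ => (1 : ℂ))

lemma indFun_memℒp {B : Set Circle2} (hB : MeasurableSet B) : MemLp (indFun B) ⊤ μT := by
  apply memLp_top_of_bound (C := 1)
  · exact (aestronglyMeasurable_const.indicator hB)
  · refine Filter.Eventually.of_forall fun x => ?_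
    by_cases h : x ∈ B <;> simp [indFun, h]

open scoped Classical in
/-- The POVM `Q(B) = J* ∘ M_{1_B} ∘ J` obtained by compressing multiplication by the
indicator of `B` to `H` (defined to be `0` for non-measurable `B`). -/
def Qop (B : Set Circle2) : H →L[ℂ] H :=
  if h : MeasurableSet B then
    (ContinuousLinearMap.adjoint JH) ∘L (mulCLM (indFun B) (indFun_memℒp h)) ∘L JH
  else 0


/-- Shorthand for the Fourier coefficients of the argument function. -/
def cF (k : ℤ) : ℂ := fourierCoeff (T := 2 * Real.pi) argFun k

lemma argFun_eq : argFun = AddCircle.liftIoc (2 * Real.pi) (-Real.pi) (fun t : ℝ => (t : ℂ)) :=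
  rfl

lemma argFun_coe {x : ℝ} (hx : x ∈ Set.Ioc (-Real.pi) (-Real.pi + 2 * Real.pi)) :
    argFun (x : Circle2) = (x : ℂ) := by
  rw [argFun_eq, AddCircle.liftIoc_coe_apply hx]

lemma exp_deriv (c : ℂ) (x : ℝ) :
    HasDerivAt (fun y : ℝ => Complex.exp (c * y)) (c * Complex.exp (c * x)) x := by
  have h : HasDerivAt (fun z : ℂ => Complex.exp (c * z))
      (Complex.exp (c * x) * c) (x : ℂ) := by
    simpa [Function.comp_def] using (Complex.hasDerivAt_exp (c * x)).comp (x : ℂ)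
      ((hasDerivAt_id (x : ℂ)).const_mul c)
  simpa [mul_comm] using h.comp_ofReal

lemma prim_deriv (c : ℂ) (hc : c ≠ 0) (x : ℝ) :
    HasDerivAt (fun y : ℝ => ((y : ℂ) / c - 1 / c ^ 2) * Complex.exp (c * y))
      ((x : ℂ) * Complex.exp (c * x)) x := by
  have h1 : HasDerivAt (fun y : ℝ => ((y : ℂ) / c - 1 / c ^ 2)) (1 / c) x := by
    have : HasDerivAt (fun y : ℝ => (y : ℂ)) 1 x := by
      simpa using (hasDerivAt_id x).ofReal_comp
    exact (this.div_const c).sub_const (1 / c ^ 2)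
  have := h1.fun_mul (exp_deriv c x)
  refine this.congr_deriv ?_
  field_simp
  ring

lemma exp_neg_int_pi (k : ℤ) (s : ℝ) (hs : s = Real.pi ∨ s = -Real.pi) :
    Complex.exp (-(k : ℂ) * Complex.I * s) = (-1 : ℂ) ^ k := by
  have h1 : Complex.exp ((Real.pi : ℂ) * Complex.I) = -1 := Complex.exp_pi_mul_I
  rcases hs with rfl | rfl
  · rw [show (-(k : ℂ) * Complex.I * Real.pi) = (-k : ℤ) * ((Real.pi : ℂ) * Complex.I) by
      push_cast; ring, Complex.exp_int_mul, h1]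
    rw [zpow_neg]
    rw [← inv_zpow, inv_neg, inv_one]
  · rw [show (-(k : ℂ) * Complex.I * (-Real.pi : ℝ)) = (k : ℤ) * ((Real.pi : ℂ) * Complex.I) by
      push_cast; ring, Complex.exp_int_mul, h1]

lemma cF_eq (k : ℤ) : cF k = if k = 0 then 0 else Complex.I * (-1 : ℂ) ^ k / k := by
  rw [cF, fourierCoeff_eq_intervalIntegral argFun k (-Real.pi)]
  have hπ : -Real.pi + 2 * Real.pi = Real.pi := by ring
  have hint : ∫ x in (-Real.pi)..(-Real.pi + 2 * Real.pi),
      (@fourier (2 * Real.pi) (-k) (x : Circle2)) • argFun (x : Circle2)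
      = ∫ x in (-Real.pi)..Real.pi, Complex.exp (-(k : ℂ) * Complex.I * x) * x := by
    rw [hπ]
    apply intervalIntegral.integral_congr_ae
    refine Filter.Eventually.of_forall fun x hx => ?_
    have hx' : x ∈ Set.Ioc (-Real.pi) (-Real.pi + 2 * Real.pi) := by
      rw [hπ]
      rw [Set.uIoc_of_le (by linarith [Real.pi_pos] : -Real.pi ≤ Real.pi)] at hx
      exact hx
    rw [argFun_coe hx', smul_eq_mul, fourier_coe_apply]
    congr 2
    have h2 : ((2 * Real.pi : ℝ) : ℂ) ≠ 0 :=
      Complex.ofReal_ne_zero.mpr (by positivity)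
    rw [div_eq_iff h2]
    push_cast
    ring
  rw [hint]
  by_cases hk : k = 0
  · subst hk
    simp only [if_pos]
    have : ∫ x in (-Real.pi)..Real.pi, Complex.exp (-(0 : ℤ) * Complex.I * x) * x
        = ∫ x in (-Real.pi)..Real.pi, ((x : ℝ) : ℂ) := by
      apply intervalIntegral.integral_congr
      intro x _; push_cast; simp
    rw [this, intervalIntegral.integral_ofReal, integral_id]
    norm_num
  · rw [if_neg hk]
    set c : ℂ := -(k : ℂ) * Complex.I with hc_def
    have hc : c ≠ 0 := by
      simp only [hc_def, neg_mul, neg_ne_zero, mul_ne_zero_iff]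
      exact ⟨Int.cast_ne_zero.mpr hk, Complex.I_ne_zero⟩
    have hderiv : ∀ x ∈ Set.uIcc (-Real.pi) Real.pi,
        HasDerivAt (fun y : ℝ => ((y : ℂ) / c - 1 / c ^ 2) * Complex.exp (c * y))
          ((x : ℂ) * Complex.exp (c * x)) x := fun x _ => prim_deriv c hc x
    have hcont : IntervalIntegrable (fun x : ℝ => (x : ℂ) * Complex.exp (c * x))
        MeasureTheory.volume (-Real.pi) Real.pi := by
      apply Continuous.intervalIntegrable
      exact (Complex.continuous_ofReal).mul
        (Complex.continuous_exp.comp (continuous_const.mul Complex.continuous_ofReal))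
    have hint2 : ∫ x in (-Real.pi)..Real.pi, Complex.exp (c * x) * x
        = ∫ x in (-Real.pi)..Real.pi, (x : ℂ) * Complex.exp (c * x) := by
      apply intervalIntegral.integral_congr
      intro x _; ring
    rw [hint2, intervalIntegral.integral_eq_sub_of_hasDerivAt hderiv hcont]
    have e1 : Complex.exp (c * Real.pi) = (-1 : ℂ) ^ k := exp_neg_int_pi k _ (Or.inl rfl)
    have e2 : Complex.exp (c * (-Real.pi : ℝ)) = (-1 : ℂ) ^ k := exp_neg_int_pi k _ (Or.inr rfl)
    rw [e1, e2]
    set w : ℂ := (-1 : ℂ) ^ k with hw_def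
    have hπC : ((Real.pi : ℝ) : ℂ) ≠ 0 := Complex.ofReal_ne_zero.mpr Real.pi_ne_zero
    have hkC : (k : ℂ) ≠ 0 := Int.cast_ne_zero.mpr hk
    have key : Complex.I * w / (k : ℂ) = w / c := by
      rw [div_eq_div_iff hkC hc]
      have hI : Complex.I * Complex.I = -1 := Complex.I_mul_I
      rw [hc_def]
      linear_combination (-(k : ℂ) * w) * hI
    rw [Complex.real_smul, key]
    push_cast
    have hb : ((Real.pi : ℂ) / c - 1 / c ^ 2) * w - ((-(Real.pi : ℂ)) / c - 1 / c ^ 2) * w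
        = 2 * (Real.pi : ℂ) / c * w := by ring
    rw [hb]
    field_simp

lemma cF_conj (k : ℤ) : (starRingEnd ℂ) (cF k) = cF (-k) := by
  rw [cF_eq, cF_eq]
  by_cases hk : k = 0
  · subst hk; simp
  · rw [if_neg hk, if_neg (neg_ne_zero.mpr hk)]
    rw [map_div₀, map_mul, Complex.conj_I]
    have h1 : (starRingEnd ℂ) ((-1 : ℂ) ^ k) = (-1 : ℂ) ^ k := by
      rw [map_zpow₀, map_neg, map_one]
    have h2 : (starRingEnd ℂ) ((k : ℤ) : ℂ) = (k : ℂ) := by simp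
    rw [h1, h2, zpow_neg, ← inv_zpow, inv_neg, inv_one]
    push_cast
    ring

lemma extlp_eH (n : ℕ) : extlp (eH n) = lp.single 2 (n : ℤ) (1 : ℂ) := by
  apply Subtype.ext
  funext z
  show extz (⇑(eH n)) z = _
  rcases le_or_gt 0 z with h | h
  · rw [extz, if_pos h]
    show (lp.single 2 n (1 : ℂ) : ∀ _ : ℕ, ℂ) z.toNat = _
    by_cases hz : z = (n : ℤ)
    · subst hz
      simp [lp.single_apply]
    · have hz' : z.toNat ≠ n := by
        intro hcontra
        exact hz (by rw [← hcontra, Int.toNat_of_nonneg h])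
      rw [lp.single_apply_ne 2 _ _ hz', lp.single_apply_ne 2 _ _ hz]
  · have hz : z ≠ (n : ℤ) := by omega
    rw [extz, if_neg (not_le.mpr h), lp.single_apply_ne 2 _ _ hz]

lemma JH_eH (n : ℕ) : JH (eH n) = fourierLp (T := 2 * Real.pi) 2 (n : ℤ) := by
  show Jmap (eH n) = _
  rw [Jmap, extlp_eH]
  have h := (fourierBasis (T := 2 * Real.pi)).repr_self (n : ℤ)
  have h2 := congrArg (fourierBasis (T := 2 * Real.pi)).repr.symm h
  rw [LinearIsometryEquiv.symm_apply_apply] at h2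
  rw [← h2, ← coe_fourierBasis]

lemma matrix_elem (n m : ℕ) :
    (inner ℂ (JH (eH n)) (mulCLM argFun argFun_memℒp (JH (eH m))) : ℂ) = cF ((n : ℤ) - m) := by
  rw [JH_eH, JH_eH]
  have hM : mulCLM argFun argFun_memℒp (fourierLp (T := 2 * Real.pi) 2 (m : ℤ))
      = (mul_memℒp argFun argFun_memℒp (fourierLp (T := 2 * Real.pi) 2 (m : ℤ))).toLp
          (argFun • ⇑(fourierLp (T := 2 * Real.pi) 2 (m : ℤ))) := rfl
  rw [hM, MeasureTheory.L2.inner_def]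
  have key : ∀ᵐ x ∂μT,
      (inner ℂ ((fourierLp (T := 2 * Real.pi) 2 (n : ℤ)) x)
        (((mul_memℒp argFun argFun_memℒp (fourierLp (T := 2 * Real.pi) 2 (m : ℤ))).toLp
          (argFun • ⇑(fourierLp (T := 2 * Real.pi) 2 (m : ℤ)))) x) : ℂ)
      = fourier (-((n : ℤ) - m)) x • argFun x := by
    filter_upwards [coeFn_fourierLp (T := 2 * Real.pi) 2 (n : ℤ),
      (mul_memℒp argFun argFun_memℒp (fourierLp (T := 2 * Real.pi) 2 (m : ℤ))).coeFn_toLp,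
      coeFn_fourierLp (T := 2 * Real.pi) 2 (m : ℤ)] with x h1 h2 h3
    rw [h1, h2, Pi.smul_apply', h3]
    rw [RCLike.inner_apply, ← fourier_neg (n := (n : ℤ))]
    rw [show (-((n : ℤ) - m)) = -(n : ℤ) + m by ring, fourier_add]
    simp only [smul_eq_mul]
    ring
  rw [MeasureTheory.integral_congr_ae key]
  rfl

lemma inner_eH_Phi_eH (n m : ℕ) : (inner ℂ (eH n) (Phi (eH m)) : ℂ) = cF ((n : ℤ) - m) := by
  rw [Phi, ContinuousLinearMap.comp_apply, ContinuousLinearMap.comp_apply,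
    ContinuousLinearMap.adjoint_inner_right]
  exact matrix_elem n m

lemma single_eq_smul_eH (n : ℕ) (a : ℂ) : lp.single 2 n a = a • eH n := by
  apply Subtype.ext
  funext j
  rw [show (⇑(a • eH n) : ℕ → ℂ) = a • ⇑(eH n) from lp.coeFn_smul a (eH n)]
  by_cases hj : j = n
  · subst hj
    rw [lp.single_apply_self, Pi.smul_apply]
    show a = a • (lp.single 2 j (1 : ℂ) : ∀ _ : ℕ, ℂ) j
    rw [lp.single_apply_self, smul_eq_mul, mul_one]
  · rw [lp.single_apply_ne 2 _ _ hj, Pi.smul_apply]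
    show (0 : ℂ) = a • (lp.single 2 n (1 : ℂ) : ∀ _ : ℕ, ℂ) j
    rw [lp.single_apply_ne 2 _ _ hj, smul_zero]

lemma hasSum_smul_eH (x : H) : HasSum (fun n : ℕ => x n • eH n) x := by
  have h := lp.hasSum_single ENNReal.ofNat_ne_top x
  have hfun : (fun n : ℕ => lp.single 2 n (x n)) = fun n : ℕ => x n • eH n :=
    funext fun n => single_eq_smul_eH n (x n)
  rwa [hfun] at h

lemma summable_norm_of_domN {f : H} (hf : f ∈ domN) : Summable fun n : ℕ => ‖f n‖ := by
  rw [← summable_nat_add_iff 1]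
  have h1 : Summable fun n : ℕ => (1 : ℝ) / ((n : ℝ) + 1) ^ 2 := by
    have := (summable_nat_add_iff (f := fun n : ℕ => (1 : ℝ) / (n : ℝ) ^ 2) 1).mpr
      (Real.summable_one_div_nat_pow.mpr (by norm_num))
    refine this.congr fun n => ?_
    push_cast
    ring
  have h2 : Summable fun n : ℕ => ((n : ℝ) + 1) ^ 2 * ‖f (n + 1)‖ ^ 2 := by
    have := (summable_nat_add_iff (f := fun n : ℕ => (n : ℝ) ^ 2 * ‖f n‖ ^ 2) 1).mpr hf
    refine this.congr fun n => ?_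
    push_cast
    ring
  refine Summable.of_nonneg_of_le (fun n => norm_nonneg _) (fun n => ?_)
    (((h1.add h2).div_const 2))
  have hn : (0 : ℝ) < (n : ℝ) + 1 := by positivity
  have hab : ‖f (n + 1)‖ = (1 / ((n : ℝ) + 1)) * (((n : ℝ) + 1) * ‖f (n + 1)‖) := by
    field_simp
  have h2ab := two_mul_le_add_sq (1 / ((n : ℝ) + 1)) (((n : ℝ) + 1) * ‖f (n + 1)‖)
  have hsq : (1 / ((n : ℝ) + 1)) ^ 2 = 1 / ((n : ℝ) + 1) ^ 2 := by
    rw [div_pow, one_pow]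
  linarith [h2ab, hab, hsq]

lemma key_arith (n m : ℕ) :
    ((n : ℂ) - m) * cF ((m : ℤ) - n)
      = Complex.I * (if m = n then 1 else 0) - Complex.I * (-1 : ℂ) ^ (n + m) := by
  by_cases h : m = n
  · subst h
    have h1 : ((-1 : ℂ)) ^ (m + m) = 1 := by
      rw [← two_mul, pow_mul]; norm_num
    have h0 : ((m : ℤ) - m) = 0 := by ring
    rw [h0, cF_eq, h1]
    simp
  · have hmn : ((m : ℤ) - n) ≠ 0 := by
      intro hc
      exact h (by omega)
    have hmnC : ((m : ℂ) - n) ≠ 0 := by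
      intro hc
      have : (m : ℂ) = n := by linear_combination hc
      exact h (by exact_mod_cast this)
    rw [if_neg h, cF_eq, if_neg hmn]
    have hcast : (((m : ℤ) - n : ℤ) : ℂ) = (m : ℂ) - n := by push_cast; ring
    have hsq : ((-1 : ℂ)) ^ n * (-1 : ℂ) ^ n = 1 := by
      rw [← pow_add, ← two_mul, pow_mul]; norm_num
    have hzp : ((-1 : ℂ)) ^ ((m : ℤ) - n) = (-1 : ℂ) ^ (n + m) := by
      rw [zpow_sub₀ (by norm_num : (-1 : ℂ) ≠ 0), zpow_natCast, zpow_natCast, pow_add]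
      rw [div_eq_iff (pow_ne_zero n (by norm_num : (-1 : ℂ) ≠ 0))]
      linear_combination (-((-1 : ℂ) ^ m)) * hsq
    rw [hzp, hcast]
    field_simp
    ring

lemma hasSum_coord_Phi (g : H) (n : ℕ) :
    HasSum (fun m : ℕ => g m * cF ((n : ℤ) - m)) (inner ℂ (eH n) (Phi g) : ℂ) := by
  have h := ((innerSL ℂ (eH n)).comp Phi).hasSum (hasSum_smul_eH g)
  have e : ∀ m : ℕ, ((innerSL ℂ (eH n)).comp Phi) (g m • eH m) = g m * cF ((n : ℤ) - m) := by
    intro m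
    rw [ContinuousLinearMap.comp_apply, _root_.map_smul, innerSL_apply_apply, inner_smul_right,
      inner_eH_Phi_eH]
  rw [funext e] at h
  simpa using h

/-- For all `f = (c_j)` and `g = (d_j)` in `D(N)`, the series `Σ (−1)^j c_j`
and `Σ (−1)^k d_k` converge absolutely, and
`⟨Nf, Φg⟩ − ⟨Φf, Ng⟩ = i⟨f, g⟩ − i·(Σ_j (−1)^j c_j)·conj(Σ_k (−1)^k d_k)`.
(The pairing `⟨·,·⟩` of the paper is linear in its first argument; Mathlib's `inner` is
conjugate-linear in the first argument, so `⟨x, y⟩ = inner y x`.) -/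
theorem inner_commutator_formula (f g : H) (hf : f ∈ domN) (hg : g ∈ domN) :
    Summable (fun j : ℕ => ‖(-1 : ℂ) ^ j * f j‖) ∧
    Summable (fun k : ℕ => ‖(-1 : ℂ) ^ k * g k‖) ∧
    (inner ℂ (Phi g) (Nop f hf) : ℂ) - (inner ℂ (Nop g hg) (Phi f) : ℂ) =
      Complex.I * (inner ℂ g f : ℂ) -
        Complex.I * (∑' j : ℕ, (-1 : ℂ) ^ j * f j) *
          (starRingEnd ℂ) (∑' k : ℕ, (-1 : ℂ) ^ k * g k) := by
  have hnorm : ∀ (x : H), ∀ j : ℕ, ‖(-1 : ℂ) ^ j * x j‖ = ‖x j‖ := by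
    intro x j
    rw [norm_mul, norm_pow, norm_neg, norm_one, one_pow, one_mul]
  have hfn : Summable fun j : ℕ => ‖(-1 : ℂ) ^ j * f j‖ :=
    (summable_norm_of_domN hf).congr fun j => (hnorm f j).symm
  have hgn : Summable fun j : ℕ => ‖(-1 : ℂ) ^ j * g j‖ :=
    (summable_norm_of_domN hg).congr fun j => (hnorm g j).symm
  refine ⟨hfn, hgn, ?_⟩
  set Sf : ℂ := ∑' j : ℕ, (-1 : ℂ) ^ j * f j with hSf_def
  set Sg : ℂ := ∑' k : ℕ, (-1 : ℂ) ^ k * g k with hSg_def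
  have hSf : HasSum (fun j : ℕ => (-1 : ℂ) ^ j * f j) Sf := (Summable.of_norm hfn).hasSum
  have hSg : HasSum (fun k : ℕ => (-1 : ℂ) ^ k * g k) Sg := (Summable.of_norm hgn).hasSum
  have hNop_apply : ∀ (x : H) (hx : x ∈ domN) (n : ℕ), (Nop x hx) n = (n : ℂ) * x n :=
    fun x hx n => rfl
  -- conjugated coordinate sums
  have hXc : ∀ n : ℕ, HasSum (fun m : ℕ => (starRingEnd ℂ) (g m) * cF ((m : ℤ) - n))
      ((starRingEnd ℂ) (inner ℂ (eH n) (Phi g) : ℂ)) := by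
    intro n
    have h := (hasSum_coord_Phi g n).star
    have e : ∀ m : ℕ, star (g m * cF ((n : ℤ) - m))
        = (starRingEnd ℂ) (g m) * cF ((m : ℤ) - n) := by
      intro m
      rw [star_mul', ← starRingEnd_apply, ← starRingEnd_apply, cF_conj,
        show (-((n : ℤ) - m)) = (m : ℤ) - n by ring]
    rw [funext e] at h
    rwa [← starRingEnd_apply] at h
  -- Y n
  have hYn : ∀ n : ℕ, HasSum (fun m : ℕ => ((m : ℂ) * (starRingEnd ℂ) (g m)) * cF ((m : ℤ) - n))
      (inner ℂ (Nop g hg) (Phi (eH n)) : ℂ) := by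
    intro n
    have h := (innerSL ℂ (Phi (eH n))).hasSum (hasSum_smul_eH (Nop g hg))
    have e : ∀ m : ℕ, (innerSL ℂ (Phi (eH n))) ((Nop g hg) m • eH m)
        = ((m : ℂ) * g m) * cF ((n : ℤ) - m) := by
      intro m
      rw [innerSL_apply_apply, inner_smul_right, hNop_apply,
        show (inner ℂ (Phi (eH n)) (eH m) : ℂ) = (starRingEnd ℂ) (inner ℂ (eH m) (Phi (eH n)) : ℂ)
          from (inner_conj_symm _ _).symm,
        inner_eH_Phi_eH, cF_conj, show (-((m : ℤ) - n)) = (n : ℤ) - m by ring]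
    rw [funext e] at h
    have h2 := h.star
    have e2 : ∀ m : ℕ, star (((m : ℂ) * g m) * cF ((n : ℤ) - m))
        = ((m : ℂ) * (starRingEnd ℂ) (g m)) * cF ((m : ℤ) - n) := by
      intro m
      rw [star_mul', ← starRingEnd_apply, ← starRingEnd_apply, cF_conj,
        show (-((n : ℤ) - m)) = (m : ℤ) - n by ring, map_mul]
      norm_num
    rw [funext e2] at h2
    rwa [show star ((innerSL ℂ (Phi (eH n))) (Nop g hg)) = (inner ℂ (Nop g hg) (Phi (eH n)) : ℂ) by
      rw [innerSL_apply_apply, ← starRingEnd_apply, inner_conj_symm]] at h2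
  -- key per-coordinate identity
  have hkey : ∀ n : ℕ, (n : ℂ) * (starRingEnd ℂ) (inner ℂ (eH n) (Phi g) : ℂ)
      - (inner ℂ (Nop g hg) (Phi (eH n)) : ℂ)
      = Complex.I * (starRingEnd ℂ) (g n) - (Complex.I * (starRingEnd ℂ) Sg) * (-1 : ℂ) ^ n := by
    intro n
    have hA := (hXc n).mul_left ((n : ℂ))
    have hAB := hA.sub (hYn n)
    have e : ∀ m : ℕ, ((n : ℂ) * ((starRingEnd ℂ) (g m) * cF ((m : ℤ) - n))
        - ((m : ℂ) * (starRingEnd ℂ) (g m)) * cF ((m : ℤ) - n))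
        = (starRingEnd ℂ) (g m) * (Complex.I * (if m = n then 1 else 0))
          - (starRingEnd ℂ) (g m) * (Complex.I * (-1 : ℂ) ^ (n + m)) := by
      intro m
      have h := key_arith n m
      calc (n : ℂ) * ((starRingEnd ℂ) (g m) * cF ((m : ℤ) - n))
          - ((m : ℂ) * (starRingEnd ℂ) (g m)) * cF ((m : ℤ) - n)
          = (starRingEnd ℂ) (g m) * (((n : ℂ) - m) * cF ((m : ℤ) - n)) := by ring
        _ = _ := by rw [h]; ring
    rw [funext e] at hAB
    have hC : HasSum (fun m : ℕ => (starRingEnd ℂ) (g m) * (Complex.I * (if m = n then 1 else 0)))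
        ((starRingEnd ℂ) (g n) * Complex.I) := by
      have h := hasSum_ite_eq n ((starRingEnd ℂ) (g n) * Complex.I)
      have e2 : (fun m : ℕ => if m = n then (starRingEnd ℂ) (g n) * Complex.I else 0)
          = fun m : ℕ => (starRingEnd ℂ) (g m) * (Complex.I * (if m = n then 1 else 0)) := by
        funext m
        split_ifs with hm
        · subst hm; ring
        · ring
      rwa [e2] at h
    have hD : HasSum (fun m : ℕ => (starRingEnd ℂ) (g m) * (Complex.I * (-1 : ℂ) ^ (n + m)))
        ((Complex.I * (-1 : ℂ) ^ n) * (starRingEnd ℂ) Sg) := by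
      have h1 := hSg.star
      have h2 := h1.mul_left (Complex.I * (-1 : ℂ) ^ n)
      have e3 : ∀ m : ℕ, (Complex.I * (-1 : ℂ) ^ n) * star ((-1 : ℂ) ^ m * g m)
          = (starRingEnd ℂ) (g m) * (Complex.I * (-1 : ℂ) ^ (n + m)) := by
        intro m
        simp only [star_mul', ← starRingEnd_apply, map_mul, map_pow, map_neg, map_one, pow_add]
        ring
      have e3' : (fun m : ℕ => (Complex.I * (-1 : ℂ) ^ n) * star ((-1 : ℂ) ^ m * g m))
          = fun m : ℕ => (starRingEnd ℂ) (g m) * (Complex.I * (-1 : ℂ) ^ (n + m)) := funext e3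
      rw [e3'] at h2
      rwa [← starRingEnd_apply] at h2
    have hu := hAB.unique (hC.sub hD)
    rw [hu]
    ring
  have hT1 : HasSum (fun n : ℕ => ((n : ℂ) * f n) * (starRingEnd ℂ) (inner ℂ (eH n) (Phi g) : ℂ))
      (inner ℂ (Phi g) (Nop f hf) : ℂ) := by
    have h := (innerSL ℂ (Phi g)).hasSum (hasSum_smul_eH (Nop f hf))
    have e : ∀ n : ℕ, (innerSL ℂ (Phi g)) ((Nop f hf) n • eH n)
        = ((n : ℂ) * f n) * (starRingEnd ℂ) (inner ℂ (eH n) (Phi g) : ℂ) := by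
      intro n
      rw [innerSL_apply_apply, inner_smul_right, hNop_apply, ← inner_conj_symm]
    rw [funext e] at h
    simpa using h
  have hT2 : HasSum (fun n : ℕ => f n * (inner ℂ (Nop g hg) (Phi (eH n)) : ℂ))
      (inner ℂ (Nop g hg) (Phi f) : ℂ) := by
    have h := ((innerSL ℂ (Nop g hg)).comp Phi).hasSum (hasSum_smul_eH f)
    have e : ∀ n : ℕ, ((innerSL ℂ (Nop g hg)).comp Phi) (f n • eH n)
        = f n * (inner ℂ (Nop g hg) (Phi (eH n)) : ℂ) := by
      intro n
      rw [ContinuousLinearMap.comp_apply, _root_.map_smul, innerSL_apply_apply, inner_smul_right]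
    rw [funext e] at h
    simpa using h
  have h6 : HasSum (fun n : ℕ => f n * (starRingEnd ℂ) (g n)) (inner ℂ g f : ℂ) := by
    have h := (innerSL ℂ g).hasSum (hasSum_smul_eH f)
    have e : ∀ n : ℕ, (innerSL ℂ g) (f n • eH n) = f n * (starRingEnd ℂ) (g n) := by
      intro n
      rw [innerSL_apply_apply, inner_smul_right, eH, lp.inner_single_right, RCLike.inner_apply,
        one_mul]
    rw [funext e] at h
    simpa using h
  have hT := hT1.sub hT2
  have e4 : (fun n : ℕ => ((n : ℂ) * f n) * (starRingEnd ℂ) (inner ℂ (eH n) (Phi g) : ℂ)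
      - f n * (inner ℂ (Nop g hg) (Phi (eH n)) : ℂ))
      = fun n : ℕ => Complex.I * (f n * (starRingEnd ℂ) (g n))
        - (Complex.I * (starRingEnd ℂ) Sg) * ((-1 : ℂ) ^ n * f n) := by
    funext n
    have h := hkey n
    calc ((n : ℂ) * f n) * (starRingEnd ℂ) (inner ℂ (eH n) (Phi g) : ℂ)
        - f n * (inner ℂ (Nop g hg) (Phi (eH n)) : ℂ)
        = f n * ((n : ℂ) * (starRingEnd ℂ) (inner ℂ (eH n) (Phi g) : ℂ)
          - (inner ℂ (Nop g hg) (Phi (eH n)) : ℂ)) := by ring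
      _ = f n * (Complex.I * (starRingEnd ℂ) (g n)
          - (Complex.I * (starRingEnd ℂ) Sg) * (-1 : ℂ) ^ n) := by rw [h]
      _ = _ := by ring
  rw [e4] at hT
  have hRHS := (h6.mul_left Complex.I).sub (hSf.mul_left (Complex.I * (starRingEnd ℂ) Sg))
  have hfin := hT.unique hRHS
  rw [hfin]
  ring

end GW
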